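/- arXiv:1409.8222 — 2 statements merged into one kernel-verified Lean document; each statement's English description precedes it below -/
import Mathlib

section
/- If a finitely generated group G has bounded conjugacy width with respect to some finite generating set, then its abelianisation G/[G,G] is finite. -/
open Pointwise
lemma set_pow_finite {M : Type*} [Monoid M] {s : Set M} (h : s.Finite) :
    ∀ n : ℕ, (s ^ n).Finite
  | 0 => by simp [Set.finite_one]
  | n + 1 => by rw [pow_succ]; exact (set_pow_finite h n).mul h

lemma list_prod_mem_pow {M : Type*} [Monoid M] (s : Set M) (h1 : (1 : M) ∈ s)
    (N : ℕ) (l : List M) (hl : l.length ≤ N) (hmem : ∀ y ∈ l, y ∈ s) :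
    l.prod ∈ s ^ N := by
  induction N generalizing l with
  | zero =>
    have : l = [] := List.length_eq_zero_iff.mp (Nat.le_zero.mp hl)
    simp [this]
  | succ n ih =>
    cases l with
    | nil =>
      simpa using Set.one_mem_pow h1
    | cons a l =>
      rw [List.prod_cons, pow_succ']
      exact Set.mul_mem_mul (hmem a (List.mem_cons_self))
        (ih l (Nat.succ_le_succ_iff.mp hl) (fun y hy => hmem y (List.mem_cons_of_mem a hy)))

/-- If a finitely generated group has bounded conjugacy width with respect to some finite
generating set, then its abelianisation is finite. -/
theorem bcw_implies_finite_abelianization {G : Type*} [Group G]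
    (X : Set G) (hX : X.Finite) (hgen : Subgroup.closure X = ⊤) (N : ℕ)
    (hbcw : ∀ g : G, ∃ l : List G, l.length ≤ N ∧
      (∀ y ∈ l, ∃ x ∈ X, ∃ h : G, y = h⁻¹ * x * h ∨ y = h⁻¹ * x⁻¹ * h) ∧
      g = l.prod) :
    Finite (Abelianization G) := by
  set f : G →* Abelianization G := Abelianization.of with hf
  set S : Set (Abelianization G) := insert 1 (f '' X ∪ (f '' X)⁻¹) with hS
  have hSfin : S.Finite := ((hX.image f).union (hX.image f).inv).insert 1
  have h1 : (1 : Abelianization G) ∈ S := Set.mem_insert _ _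
  have huniv : (Set.univ : Set (Abelianization G)) ⊆ S ^ N := by
    intro a _
    obtain ⟨g, rfl⟩ := QuotientGroup.mk_surjective (s := commutator G) a
    obtain ⟨l, hlen, hmem, hprod⟩ := hbcw g
    have : Abelianization.of g = (l.map f).prod := by
      rw [hprod, List.prod_hom]
    show Abelianization.of g ∈ S ^ N
    rw [this]
    apply list_prod_mem_pow S h1 N (l.map f) (by simpa using hlen)
    intro y hy
    obtain ⟨z, hz, rfl⟩ := List.mem_map.mp hy
    obtain ⟨x, hx, h, hcase⟩ := hmem z hz
    rcases hcase with h' | h'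
    · have : f z = f x := by
        simp [h', map_mul, map_inv, mul_comm, mul_assoc, mul_left_comm]
      rw [this]
      exact Set.mem_insert_of_mem _ (Or.inl ⟨x, hx, rfl⟩)
    · have : f z = (f x)⁻¹ := by
        simp [h', map_mul, map_inv, mul_comm, mul_assoc, mul_left_comm]
      rw [this]
      exact Set.mem_insert_of_mem _ (Or.inr (Set.inv_mem_inv.mpr ⟨x, hx, rfl⟩))
  have : (Set.univ : Set (Abelianization G)).Finite :=
    (set_pow_finite hSfin N).subset huniv
  exact Set.finite_univ_iff.mp this
end

section
/- If a finitely generated group H has bounded conjugacy width and G is a finitely generated group containing H as a finite index subgroup, then G has bounded conjugacy width (with respect to any finite generating set of G that contains a generating set giving the elements of H, appropriately: there exists N such that every element of G is a product of at most N conjugates of generators of G and their inverses). -/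
section Aux

variable {G : Type*} [Group G]

/-- `Good X y` : `y` is a conjugate of an element of `X` or of an inverse of one. -/
private def Good (X : Set G) (y : G) : Prop :=
  ∃ x ∈ X, ∃ t : G, y = t⁻¹ * x * t ∨ y = t⁻¹ * x⁻¹ * t

/-- `W X n g` : `g` is a product of at most `n` good letters. -/
private def W (X : Set G) (n : ℕ) (g : G) : Prop :=
  ∃ l : List G, l.length ≤ n ∧ (∀ y ∈ l, Good X y) ∧ g = l.prod

private lemma W.mono {X : Set G} {m n : ℕ} {g : G} (h : W X m g) (hmn : m ≤ n) : W X n g := by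
  obtain ⟨l, hl, hgood, hprod⟩ := h
  exact ⟨l, hl.trans hmn, hgood, hprod⟩

private lemma W.mul {X : Set G} {m n : ℕ} {a b : G} (ha : W X m a) (hb : W X n b) :
    W X (m + n) (a * b) := by
  obtain ⟨la, hla, hga, rfl⟩ := ha
  obtain ⟨lb, hlb, hgb, rfl⟩ := hb
  refine ⟨la ++ lb, ?_, ?_, ?_⟩
  · simpa using Nat.add_le_add hla hlb
  · intro y hy
    rcases List.mem_append.1 hy with h | h
    · exact hga y h
    · exact hgb y h
  · simp

private lemma Good.inv {X : Set G} {y : G} (h : Good X y) : Good X y⁻¹ := by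
  obtain ⟨x, hx, t, h | h⟩ := h
  · exact ⟨x, hx, t, Or.inr (by rw [h]; group)⟩
  · exact ⟨x, hx, t, Or.inl (by rw [h]; group)⟩

private lemma W.inv {X : Set G} {n : ℕ} {g : G} (h : W X n g) : W X n g⁻¹ := by
  obtain ⟨l, hl, hgood, rfl⟩ := h
  refine ⟨(l.map fun x => x⁻¹).reverse, by simpa using hl, ?_, List.prod_inv_reverse l⟩
  intro y hy
  simp only [List.mem_reverse, List.mem_map] at hy
  obtain ⟨z, hz, rfl⟩ := hy
  exact (hgood z hz).inv

private lemma Good.conj {X : Set G} {y : G} (h : Good X y) (u : G) : Good X (u⁻¹ * y * u) := by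
  obtain ⟨x, hx, t, h | h⟩ := h
  · exact ⟨x, hx, t * u, Or.inl (by rw [h]; group)⟩
  · exact ⟨x, hx, t * u, Or.inr (by rw [h]; group)⟩

private lemma W.conj {X : Set G} {n : ℕ} {g : G} (h : W X n g) (u : G) :
    W X n (u⁻¹ * g * u) := by
  obtain ⟨l, hl, hgood, rfl⟩ := h
  refine ⟨l.map fun y => u⁻¹ * y * u, by simpa using hl, ?_, ?_⟩
  · intro y hy
    simp only [List.mem_map] at hy
    obtain ⟨z, hz, rfl⟩ := hy
    exact (hgood z hz).conj u
  · clear hl hgood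
    induction l with
    | nil => simp
    | cons a l ih =>
        simp only [List.prod_cons, List.map_cons]
        rw [← ih]
        group

/-- every element of `G` is `W X n` for some `n`, given `closure X = ⊤`. -/
private lemma exists_W {X : Set G} (hXgen : Subgroup.closure X = ⊤) (g : G) :
    ∃ n, W X n g := by
  have hg : g ∈ (Subgroup.closure X).toSubmonoid := by rw [hXgen]; trivial
  rw [Subgroup.closure_toSubmonoid] at hg
  obtain ⟨l, hl, rfl⟩ := Submonoid.exists_list_of_mem_closure hg
  refine ⟨l.length, l, le_rfl, ?_, rfl⟩
  intro y hy
  rcases hl y hy with h | h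
  · exact ⟨y, h, 1, Or.inl (by group)⟩
  · exact ⟨y⁻¹, h, 1, Or.inr (by group)⟩

private lemma W.listProd {X : Set G} {M : ℕ} :
    ∀ l : List G, (∀ y ∈ l, W X M y) → W X (l.length * M) l.prod := by
  intro l
  induction l with
  | nil => intro _; exact ⟨[], by simp, by simp, by simp⟩
  | cons a l ih =>
      intro h
      have := (h a (List.mem_cons_self)).mul
        (ih (fun y hy => h y (List.mem_cons_of_mem _ hy)))
      simpa [List.length_cons, add_mul, add_comm, one_mul] using this

end Aux

/-- Bounded conjugacy width passes to finite extensions: if a finite index subgroup `H` of a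
finitely generated group `G` has bounded conjugacy width (conjugation taken in `G`), then `G`
has bounded conjugacy width with respect to any finite generating set `X`. -/
theorem bcw_finite_extension {G : Type*} [Group G] (H : Subgroup G) [H.FiniteIndex]
    (S : Set G) (hSfin : S.Finite) (hSH : S ⊆ (H : Set G))
    (hSgen : Subgroup.closure S = H) (NH : ℕ)
    (hHbcw : ∀ h ∈ H, ∃ l : List G, l.length ≤ NH ∧
      (∀ y ∈ l, ∃ x ∈ S, ∃ t : G, y = t⁻¹ * x * t ∨ y = t⁻¹ * x⁻¹ * t) ∧
      h = l.prod)
    (X : Set G) (hXfin : X.Finite) (hXgen : Subgroup.closure X = ⊤) :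
    ∃ N : ℕ, ∀ g : G, ∃ l : List G, l.length ≤ N ∧
      (∀ y ∈ l, ∃ x ∈ X, ∃ t : G, y = t⁻¹ * x * t ∨ y = t⁻¹ * x⁻¹ * t) ∧
      g = l.prod := by
  -- choose for each element a word length
  choose n hn using exists_W hXgen (G := G)
  -- bound for elements of S
  set M : ℕ := hSfin.toFinset.sup n with hM
  have hWS : ∀ s ∈ S, W X M s := fun s hs =>
    (hn s).mono (Finset.le_sup (hSfin.mem_toFinset.2 hs))
  -- every element of H is W X (NH * M)
  have hWH : ∀ h ∈ H, W X (NH * M) h := by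
    intro h hh
    obtain ⟨l, hlen, hgood, rfl⟩ := hHbcw h hh
    have : ∀ y ∈ l, W X M y := by
      intro y hy
      obtain ⟨x, hx, t, h | h⟩ := hgood y hy
      · rw [h]; exact (hWS x hx).conj t
      · rw [h]; exact (hWS x hx).inv.conj t
    exact (W.listProd l this).mono (Nat.mul_le_mul_right M hlen)
  -- transversal
  haveI : Finite (G ⧸ H) := H.finite_quotient_of_finiteIndex
  have hT : (Set.range (fun q : G ⧸ H => q.out)).Finite := Set.finite_range _
  set K : ℕ := hT.toFinset.sup n with hK
  refine ⟨K + NH * M, fun g => ?_⟩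
  set t : G := (QuotientGroup.mk g : G ⧸ H).out with ht
  have htg : t⁻¹ * g ∈ H := by
    rw [← QuotientGroup.eq]
    exact QuotientGroup.out_eq' _
  have hWt : W X K t :=
    (hn t).mono (Finset.le_sup (hT.mem_toFinset.2 ⟨_, rfl⟩))
  have : W X (K + NH * M) g := by
    have := hWt.mul (hWH _ htg)
    simpa [mul_assoc] using this
  exact this
end
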